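/- Let n be an even integer and W an odd integer with |W| ≥ 3. Define Λ as the quotient of the additive group Z[t^{±1}] by the subgroup generated by t^0, t^{-1}, and t^k + (-1)^n t^{W-1-k} for all k ∈ Z. Then the image of t^{(W-1)/2} in Λ has order exactly 2, and Λ is isomorphic to Z/2Z ⊕ F where F is a free abelian group. -/

import Mathlib

/-- The abelian group of integer Laurent polynomials `ℤ[t^{±1}]`,
with `t^k` represented by `Finsupp.single k 1`. -/
abbrev LaurentGrp : Type := ℤ →₀ ℤ

/-- The set of relators: `t^0`, `t^{-1}`, and `t^k + (-1)^n t^{W-1-k}` for all `k ∈ ℤ`. -/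
def relSet (n W : ℤ) : Set LaurentGrp :=
  {Finsupp.single 0 1, Finsupp.single (-1) 1} ∪
    {x | ∃ k : ℤ, x = Finsupp.single k 1 +
      Finsupp.single (W - 1 - k) (((-1 : ℤˣ) ^ n : ℤˣ) : ℤ)}

/-- The quotient group `Λ = ℤ[t^{±1}] / ⟨t^0, t^{-1}, t^k + (-1)^n t^{W-1-k}⟩`. -/
abbrev LambdaGrp (n W : ℤ) : Type := LaurentGrp ⧸ AddSubgroup.closure (relSet n W)




abbrev SIdx (W : ℤ) : Type :=
  {k : ℤ // (W - 1) / 2 < k ∧ k ≠ 0 ∧ k ≠ -1 ∧ k ≠ W - 1 ∧ k ≠ W}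

noncomputable def bas (W k : ℤ) : SIdx W →₀ ℤ :=
  if h : (W - 1) / 2 < k ∧ k ≠ 0 ∧ k ≠ -1 ∧ k ≠ W - 1 ∧ k ≠ W then
    Finsupp.single ⟨k, h⟩ 1 else 0

noncomputable def genImg (W k : ℤ) : ZMod 2 × (SIdx W →₀ ℤ) :=
  if k = 0 ∨ k = -1 ∨ k = W - 1 ∨ k = W then 0
  else if k = (W - 1) / 2 then (1, 0)
  else if (W - 1) / 2 < k then (0, bas W k)
  else (0, -bas W (W - 1 - k))

lemma genImg_add_rev {W : ℤ} (hW : Odd W) (k : ℤ) :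
    genImg W k + genImg W (W - 1 - k) = 0 := by
  obtain ⟨c, hc⟩ := hW
  have hm : (W - 1) / 2 = c := by omega
  by_cases h0 : k = 0 ∨ k = -1 ∨ k = W - 1 ∨ k = W
  · have h0' : W - 1 - k = 0 ∨ W - 1 - k = -1 ∨ W - 1 - k = W - 1 ∨ W - 1 - k = W := by omega
    rw [genImg, genImg, if_pos h0, if_pos h0', add_zero]
  · have h0' : ¬ (W - 1 - k = 0 ∨ W - 1 - k = -1 ∨ W - 1 - k = W - 1 ∨ W - 1 - k = W) := by omega
    by_cases hmk : k = (W - 1) / 2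
    · have h2 : W - 1 - k = (W - 1) / 2 := by omega
      rw [genImg, genImg, if_neg h0, if_neg h0', if_pos hmk, if_pos h2]
      refine Prod.ext_iff.mpr ⟨?_, by simp⟩
      have h11 : (1 : ZMod 2) + 1 = 0 := by decide
      simpa using h11
    · have hm' : W - 1 - k ≠ (W - 1) / 2 := by omega
      by_cases hlt : (W - 1) / 2 < k
      · have hlt' : ¬ (W - 1) / 2 < W - 1 - k := by omega
        rw [genImg, genImg, if_neg h0, if_neg h0', if_neg hmk, if_neg hm', if_pos hlt,
          if_neg hlt', show W - 1 - (W - 1 - k) = k by ring]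
        exact Prod.ext_iff.mpr ⟨by simp, by simp⟩
      · have hlt' : (W - 1) / 2 < W - 1 - k := by omega
        rw [genImg, genImg, if_neg h0, if_neg h0', if_neg hmk, if_neg hm', if_neg hlt,
          if_pos hlt']
        exact Prod.ext_iff.mpr ⟨by simp, by simp⟩


/-- For `n` even and `W` odd with `|W| ≥ 3`, the image of `t^{(W-1)/2}` in `Λ` has
order exactly 2, and `Λ ≅ ℤ/2 ⊕ F` with `F` free abelian. -/
theorem stmt_1 (n W : ℤ) (hn : Even n) (hW : Odd W) (hW3 : 3 ≤ |W|) :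
    addOrderOf
        ((QuotientAddGroup.mk (Finsupp.single ((W - 1) / 2) 1) : LambdaGrp n W)) = 2 ∧
      ∃ (F : Type) (_ : AddCommGroup F), Module.Free ℤ F ∧
        Nonempty (LambdaGrp n W ≃+ (ZMod 2 × F)) := by
  classical
  obtain ⟨c, hc⟩ := id hW
  have hm : (W - 1) / 2 = c := by omega
  have hrange : 3 ≤ W ∨ W ≤ -3 := by rcases abs_cases W with ⟨h, _⟩ | ⟨h, _⟩ <;> omega
  have hcoef : (((-1 : ℤˣ) ^ n : ℤˣ) : ℤ) = 1 := by
    obtain ⟨d, rfl⟩ := hn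
    rw [zpow_add, ← sq, Int.units_sq, Units.val_one]
  set N := AddSubgroup.closure (relSet n W) with hN
  -- membership of relators
  have mem0 : Finsupp.single (0 : ℤ) (1 : ℤ) ∈ N :=
    AddSubgroup.subset_closure (by left; left; rfl)
  have mem1 : Finsupp.single (-1 : ℤ) (1 : ℤ) ∈ N :=
    AddSubgroup.subset_closure (by left; right; rfl)
  have memrel : ∀ k : ℤ, Finsupp.single k 1 + Finsupp.single (W - 1 - k) 1 ∈ N := by
    intro k
    refine AddSubgroup.subset_closure ?_
    right
    exact ⟨k, by rw [hcoef]⟩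
  -- quotient facts
  have q0 : ((Finsupp.single (0:ℤ) (1:ℤ) : LaurentGrp) : LambdaGrp n W) = 0 :=
    (QuotientAddGroup.eq_zero_iff _).2 mem0
  have q1 : ((Finsupp.single (-1:ℤ) (1:ℤ) : LaurentGrp) : LambdaGrp n W) = 0 :=
    (QuotientAddGroup.eq_zero_iff _).2 mem1
  have qrel : ∀ k : ℤ, ((Finsupp.single k 1 : LaurentGrp) : LambdaGrp n W) +
      ((Finsupp.single (W - 1 - k) 1 : LaurentGrp) : LambdaGrp n W) = 0 := by
    intro k
    rw [← QuotientAddGroup.mk_add]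
    exact (QuotientAddGroup.eq_zero_iff _).2 (memrel k)
  have qW1 : ((Finsupp.single (W - 1 : ℤ) (1:ℤ) : LaurentGrp) : LambdaGrp n W) = 0 := by
    have h := qrel 0
    rw [q0, zero_add, sub_zero] at h
    exact h
  have qW : ((Finsupp.single (W : ℤ) (1:ℤ) : LaurentGrp) : LambdaGrp n W) = 0 := by
    have h := qrel (-1)
    rw [q1, zero_add, show W - 1 - (-1) = W by ring] at h
    exact h
  -- the forward homomorphism
  set φ : LaurentGrp →+ ZMod 2 × (SIdx W →₀ ℤ) :=
    Finsupp.liftAddHom (fun k => zmultiplesHom _ (genImg W k)) with hφ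
  have hφsingle : ∀ k : ℤ, φ (Finsupp.single k 1) = genImg W k := by
    intro k
    rw [hφ, Finsupp.liftAddHom_apply_single, zmultiplesHom_apply, one_zsmul]
  have hker : N ≤ φ.ker := by
    rw [hN, AddSubgroup.closure_le]
    rintro x hx
    simp only [relSet, Set.mem_union, Set.mem_insert_iff, Set.mem_singleton_iff,
      Set.mem_setOf_eq] at hx
    rw [SetLike.mem_coe, AddMonoidHom.mem_ker]
    rcases hx with (rfl | rfl) | ⟨k, hk⟩
    · rw [hφsingle, genImg, if_pos (by left; rfl)]
    · rw [hφsingle, genImg, if_pos (by right; left; rfl)]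
    · rw [hcoef] at hk
      subst hk
      rw [map_add, hφsingle, hφsingle]
      exact genImg_add_rev hW k
  set φ' : LambdaGrp n W →+ ZMod 2 × (SIdx W →₀ ℤ) :=
    QuotientAddGroup.lift N φ hker with hφ'
  have hφ'mk : ∀ x : LaurentGrp, φ' (↑x) = φ x := fun x => QuotientAddGroup.lift_mk N hker x
  -- target of t^m
  set xm : LambdaGrp n W := ((Finsupp.single ((W - 1) / 2) 1 : LaurentGrp) : LambdaGrp n W)
    with hxm
  have hxm2 : ((2:ℕ) : ℤ) • xm = 0 := by
    have h := qrel ((W - 1) / 2)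
    rw [show W - 1 - (W - 1) / 2 = (W - 1) / 2 by omega] at h
    rw [show ((2:ℕ):ℤ) = (2:ℤ) by norm_num, two_zsmul]
    exact h
  -- the backward homomorphism
  set ψ₁ : ZMod 2 →+ LambdaGrp n W := ZMod.lift 2 ⟨zmultiplesHom _ xm, hxm2⟩ with hψ₁
  set ψ₂ : (SIdx W →₀ ℤ) →+ LambdaGrp n W :=
    Finsupp.liftAddHom (fun s => zmultiplesHom _ ((Finsupp.single s.1 1 : LaurentGrp) :
      LambdaGrp n W)) with hψ₂
  set ψ : ZMod 2 × (SIdx W →₀ ℤ) →+ LambdaGrp n W := ψ₁.coprod ψ₂ with hψ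
  have hψ₁one : ψ₁ 1 = xm := by
    rw [hψ₁, show (1 : ZMod 2) = ((1:ℤ) : ZMod 2) by norm_num, ZMod.lift_coe,
      zmultiplesHom_apply, one_zsmul]
  have hψ₂single : ∀ (s : SIdx W), ψ₂ (Finsupp.single s 1) =
      ((Finsupp.single s.1 1 : LaurentGrp) : LambdaGrp n W) := by
    intro s
    rw [hψ₂, Finsupp.liftAddHom_apply_single, zmultiplesHom_apply, one_zsmul]
  have key : ∀ k : ℤ, ψ (genImg W k) = ((Finsupp.single k 1 : LaurentGrp) : LambdaGrp n W) := by
    intro k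
    by_cases h0 : k = 0 ∨ k = -1 ∨ k = W - 1 ∨ k = W
    · rw [genImg, if_pos h0, map_zero]
      rcases h0 with rfl | rfl | rfl | rfl
      · exact q0.symm
      · exact q1.symm
      · exact qW1.symm
      · exact qW.symm
    · by_cases hmk : k = (W - 1) / 2
      · subst hmk
        rw [genImg, if_neg h0, if_pos rfl, hψ, AddMonoidHom.coprod_apply, map_zero, add_zero,
          hψ₁one, hxm]
      · push_neg at h0
        obtain ⟨h0a, h0b, h0c, h0d⟩ := h0
        by_cases hlt : (W - 1) / 2 < k
        · have hg : (W - 1) / 2 < k ∧ k ≠ 0 ∧ k ≠ -1 ∧ k ≠ W - 1 ∧ k ≠ W :=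
            ⟨hlt, h0a, h0b, h0c, h0d⟩
          rw [genImg, if_neg (by tauto), if_neg hmk, if_pos hlt, bas, dif_pos hg, hψ,
            AddMonoidHom.coprod_apply, map_zero, zero_add, hψ₂single]
        · have hg : (W - 1) / 2 < W - 1 - k ∧ W - 1 - k ≠ 0 ∧ W - 1 - k ≠ -1 ∧
              W - 1 - k ≠ W - 1 ∧ W - 1 - k ≠ W := by omega
          rw [genImg, if_neg (by tauto), if_neg hmk, if_neg hlt, bas, dif_pos hg, hψ,
            AddMonoidHom.coprod_apply, map_zero, zero_add, map_neg, hψ₂single]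
          exact neg_eq_of_add_eq_zero_left (qrel k)
    -- end key
  have li : ∀ x : LambdaGrp n W, ψ (φ' x) = x := by
    have H : ψ.comp (φ'.comp (QuotientAddGroup.mk' N)) = QuotientAddGroup.mk' N := by
      apply Finsupp.addHom_ext'
      intro a
      apply AddMonoidHom.ext_int
      simp only [AddMonoidHom.comp_apply, Finsupp.singleAddHom_apply, QuotientAddGroup.mk'_apply]
      rw [hφ'mk, hφsingle]
      exact key a
    intro x
    obtain ⟨y, rfl⟩ := QuotientAddGroup.mk'_surjective N x
    exact DFunLike.congr_fun H y
  have hinr : ∀ s : SIdx W →₀ ℤ, φ' (ψ₂ s) = (0, s) := by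
    have H : φ'.comp ψ₂ = AddMonoidHom.inr (ZMod 2) _ := by
      apply Finsupp.addHom_ext'
      intro a
      apply AddMonoidHom.ext_int
      simp only [AddMonoidHom.comp_apply, Finsupp.singleAddHom_apply, AddMonoidHom.inr_apply]
      rw [hψ₂single, hφ'mk, hφsingle]
      obtain ⟨h1, h2, h3, h4, h5⟩ := a.2
      rw [genImg, if_neg (by tauto), if_neg (by omega), if_pos h1, bas, dif_pos]
    intro s
    exact DFunLike.congr_fun H s
  have hφ'xm : φ' xm = ((1 : ZMod 2), (0 : SIdx W →₀ ℤ)) := by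
    rw [hxm, hφ'mk, hφsingle, genImg, if_neg (by omega), if_pos rfl]
  have hψ1 : ∀ a : ZMod 2, φ' (ψ₁ a) = (a, 0) := by
    intro a
    rcases (by decide : ∀ b : ZMod 2, b = 0 ∨ b = 1) a with rfl | rfl
    · simp; rfl
    · rw [hψ₁one, hφ'xm]
  have ri : ∀ y : ZMod 2 × (SIdx W →₀ ℤ), φ' (ψ y) = y := by
    rintro ⟨a, s⟩
    rw [hψ, AddMonoidHom.coprod_apply, map_add, hψ1, hinr, Prod.mk_add_mk, add_zero, zero_add]
  have e : LambdaGrp n W ≃+ ZMod 2 × (SIdx W →₀ ℤ) :=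
    { toFun := φ', invFun := ψ, left_inv := li, right_inv := ri, map_add' := map_add φ' }
  haveI : Fact (Nat.Prime 2) := ⟨Nat.prime_two⟩
  constructor
  · refine addOrderOf_eq_prime ?_ ?_
    · have h := hxm2
      rwa [natCast_zsmul] at h
    · intro h
      have h3 : xm = 0 := h
      have h2 := hφ'xm
      rw [h3, map_zero] at h2
      have h4 : (0 : ZMod 2) = 1 := congrArg Prod.fst h2
      exact absurd h4 zero_ne_one
  · refine ⟨SIdx W →₀ ℤ, inferInstance, ?_, ⟨e⟩⟩
    haveI : Subsingleton (Module ℤ (SIdx W →₀ ℤ)) :=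
      (AddCommGroup.uniqueIntModule).instSubsingleton
    have hfree : Module.Free ℤ (SIdx W →₀ ℤ) := inferInstance
    convert hfree
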